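/- Let X be a compact metric space and f: X → X continuous and conformal with continuous factor a: X → (0,∞). If the Lyapunov exponent λ(x) = lim_n (1/n) S_n log a(x) exists and is positive for a point x ∈ X, then x satisfies the tempered contraction condition: for every ε > 0, inf over n ∈ ℕ and 0 ≤ k ≤ n of { S_{n−k} log a(f^k x) + nε } > −∞. -/

import Mathlib

open Filter Topology Metric Set
open scoped ENNReal NNReal

noncomputable section

namespace BowenNonuniform

variable {X : Type*}

/-- Birkhoff sum `S_n φ(x) = Σ_{k=0}^{n-1} φ(f^k x)`. -/
def birkhoff (f : X → X) (φ : X → ℝ) (n : ℕ) (x : X) : ℝ :=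
  ∑ k ∈ Finset.range n, φ (f^[k] x)

/-- `λ_n(x) = (1/n) S_n log a (x)`. -/
def lyapAvg (f : X → X) (a : X → ℝ) (n : ℕ) (x : X) : ℝ :=
  birkhoff f (fun y => Real.log (a y)) n x / n

/-- Tempered contraction: for every `ε > 0`,
`inf_{n, 0 ≤ k ≤ n} { S_{n-k} log a (f^k x) + n ε } > -∞`. -/
def TemperedContraction (f : X → X) (a : X → ℝ) (x : X) : Prop :=
  ∀ ε > 0, ∃ C : ℝ, ∀ n : ℕ, ∀ k ≤ n,
    C ≤ birkhoff f (fun y => Real.log (a y)) (n - k) (f^[k] x) + n * ε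

/-- Critical exponent of a one-parameter family of outer quantities. -/
def critExp (m : ℝ → ℝ≥0∞) : ℝ≥0∞ := ⨆ (d : ℝ≥0) (_ : m d = ⊤), (d : ℝ≥0∞)

section MetricDefs

variable [MetricSpace X]

/-- `f` is conformal with factor `a`: `a(x) = lim_{y→x} d(f x, f y)/d(x,y)`, `a` continuous. -/
def ConformalWith (f : X → X) (a : X → ℝ) : Prop :=
  Continuous a ∧ ∀ x : X,
    Tendsto (fun y => dist (f x) (f y) / dist x y) (𝓝[≠] x) (𝓝 (a x))

/-- Bowen ball `B(x,n,δ)`. -/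
def bowenBall (f : X → X) (x : X) (n : ℕ) (δ : ℝ) : Set X :=
  {y | ∀ k ≤ n, dist (f^[k] y) (f^[k] x) < δ}

/-- Countable covers of `Z` by Bowen balls of order at least `N`, centred in `Z`. -/
def pressureCovers (f : X → X) (Z : Set X) (N : ℕ) (δ : ℝ) : Set (Set (X × ℕ)) :=
  {E | E.Countable ∧ (∀ p ∈ E, p.1 ∈ Z ∧ N ≤ p.2) ∧ Z ⊆ ⋃ p ∈ E, bowenBall f p.1 p.2 δ}

/-- The pressure set function `m_P(Z,s,φ,N,δ)`. -/
def mP (f : X → X) (φ : X → ℝ) (Z : Set X) (s : ℝ) (N : ℕ) (δ : ℝ) : ℝ≥0∞ :=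
  ⨅ (E : Set (X × ℕ)) (_ : E ∈ pressureCovers f Z N δ),
    ∑' p : E, ENNReal.ofReal (Real.exp (-(p.1.2 : ℝ) * s + birkhoff f φ p.1.2 p.1.1))

/-- `m_P(Z,s,φ,δ) = lim_{N→∞} m_P(Z,s,φ,N,δ)` (increasing in `N`). -/
def mPd (f : X → X) (φ : X → ℝ) (Z : Set X) (s : ℝ) (δ : ℝ) : ℝ≥0∞ :=
  ⨆ N : ℕ, mP f φ Z s N δ

/-- `P_Z(φ,δ)`: critical value of `s ↦ m_P(Z,s,φ,δ)`. -/
def presd (f : X → X) (φ : X → ℝ) (Z : Set X) (δ : ℝ) : ℝ :=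
  sInf {s : ℝ | mPd f φ Z s δ = 0}

/-- The Carathéodory (Pesin–Pitskel') topological pressure `P_Z(φ) = lim_{δ→0} P_Z(φ,δ)`,
realised as a supremum since `δ ↦ P_Z(φ,δ)` is non-increasing in `δ`. -/
def pres (f : X → X) (φ : X → ℝ) (Z : Set X) : ℝ :=
  ⨆ δ : {d : ℝ // 0 < d}, presd f φ Z δ.1

/-- Countable covers of `Z` by metric balls centred in `Z` of radius in `(0,ε]`. -/
def ballCovers (Z : Set X) (ε : ℝ) : Set (Set (X × ℝ)) :=
  {E | E.Countable ∧ (∀ p ∈ E, p.1 ∈ Z ∧ 0 < p.2 ∧ p.2 ≤ ε) ∧ Z ⊆ ⋃ p ∈ E, ball p.1 p.2}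

/-- `m_H^b(Z,s,ε)`: ball covers weighted by `(diam B(x_i,r_i))^s`. -/
def mHb (Z : Set X) (s ε : ℝ) : ℝ≥0∞ :=
  ⨅ (E : Set (X × ℝ)) (_ : E ∈ ballCovers Z ε),
    ∑' p : E, ENNReal.ofReal (diam (ball p.1.1 p.1.2)) ^ s

/-- `m_H^{b'}(Z,s,ε)`: ball covers weighted by `(2 r_i)^s`. -/
def mHb' (Z : Set X) (s ε : ℝ) : ℝ≥0∞ :=
  ⨅ (E : Set (X × ℝ)) (_ : E ∈ ballCovers Z ε),
    ∑' p : E, ENNReal.ofReal (2 * p.1.2) ^ s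

/-- `m_H^b(Z,s) = lim_{ε→0} m_H^b(Z,s,ε)` (the quantity is non-increasing in `ε`). -/
def mHbLim (Z : Set X) (s : ℝ) : ℝ≥0∞ := ⨆ (ε : ℝ) (_ : 0 < ε), mHb Z s ε

def mHb'Lim (Z : Set X) (s : ℝ) : ℝ≥0∞ := ⨆ (ε : ℝ) (_ : 0 < ε), mHb' Z s ε

/-- Countable open covers of `Z` of diameter at most `ε`. -/
def openCovers (Z : Set X) (ε : ℝ) : Set (Set (Set X)) :=
  {E | E.Countable ∧ (∀ U ∈ E, IsOpen U ∧ diam U ≤ ε) ∧ Z ⊆ ⋃₀ E}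

/-- `m_H(Z,s,ε)`: open covers weighted by `(diam U_i)^s`. -/
def mH (Z : Set X) (s ε : ℝ) : ℝ≥0∞ :=
  ⨅ (E : Set (Set X)) (_ : E ∈ openCovers Z ε),
    ∑' U : E, ENNReal.ofReal (diam (U : Set X)) ^ s

/-- `m_H(Z,s) = lim_{ε→0} m_H(Z,s,ε)`. -/
def mHLim (Z : Set X) (s : ℝ) : ℝ≥0∞ := ⨆ (ε : ℝ) (_ : 0 < ε), mH Z s ε

end MetricDefs

/-- The set `X(𝐔)` determined by a string `L` of open sets. -/
def stringSet (f : X → X) (L : List (Set X)) : Set X :=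
  {x | ∀ j < L.length, f^[j] x ∈ L.getD j ∅}

/-- Countable covers of `Z` by strings over the cover `𝒰` of length at least `N`. -/
def stringCovers (f : X → X) (U : Finset (Set X)) (Z : Set X) (N : ℕ) :
    Set (Set (List (Set X))) :=
  {G | G.Countable ∧ (∀ L ∈ G, N ≤ L.length ∧ ∀ V ∈ L, V ∈ U) ∧
       Z ⊆ ⋃ L ∈ G, stringSet f L}

/-- Pesin–Pitskel' set function `m_P'(Z,φ,𝒰,s,N)`. -/
def mPP (f : X → X) (φ : X → ℝ) (U : Finset (Set X)) (Z : Set X) (s : ℝ) (N : ℕ) : ℝ≥0∞ :=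
  ⨅ (G : Set (List (Set X))) (_ : G ∈ stringCovers f U Z N),
    ∑' L : G, ENNReal.ofReal (Real.exp (-s * ((L : List (Set X)).length : ℝ) +
      sSup ((fun x => birkhoff f φ (L : List (Set X)).length x) ''
        stringSet f (L : List (Set X)))))

/-- Pesin–Pitskel' pressure `P'_Z(φ,𝒰)`: critical value of `s`. -/
def presPP (f : X → X) (φ : X → ℝ) (U : Finset (Set X)) (Z : Set X) : ℝ :=
  sInf {s : ℝ | (⨆ N : ℕ, mPP f φ U Z s N) = 0}

open Classical in
/-- Distance on the full one-sided shift determined by `ψ`: `d(x,y) = ψ(x ∧ y)`,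
where `x ∧ y` is the longest common prefix. -/
def shiftDist {k : ℕ} (ψ : List (Fin k) → ℝ) (x y : ℕ → Fin k) : ℝ :=
  if h : x = y then 0
  else ψ (List.ofFn (fun i : Fin (Nat.find (Function.ne_iff.mp h)) => x i))

/-- The word `x_1 … x_n` (prefix of length `n`). -/
def prefixWord {k : ℕ} (x : ℕ → Fin k) (n : ℕ) : List (Fin k) :=
  List.ofFn (fun i : Fin n => x i)

/-- The one-sided shift map. -/
def shiftMap {k : ℕ} (x : ℕ → Fin k) : ℕ → Fin k := fun n => x (n + 1)

end BowenNonuniform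

open BowenNonuniform

theorem stmt6 {X : Type*} [MetricSpace X] [CompactSpace X] (f : X → X) (a : X → ℝ)
    (hf : Continuous f) (hc : ConformalWith f a) (ha : ∀ x, 0 < a x)
    (x : X) (lam : ℝ) (hlam : 0 < lam)
    (hx : Tendsto (fun n : ℕ => lyapAvg f a n x) atTop (𝓝 lam)) :
    TemperedContraction f a x := by
  intro eps heps
  set φ : X → ℝ := fun y => Real.log (a y) with hφ
  have key : ∀ n k : ℕ, k ≤ n →
      birkhoff f φ (n - k) (f^[k] x) = birkhoff f φ n x - birkhoff f φ k x := by
    intro n k hk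
    have gen : ∀ m : ℕ, birkhoff f φ (k + m) x = birkhoff f φ k x + birkhoff f φ m (f^[k] x) := by
      intro m
      unfold birkhoff
      rw [Finset.sum_range_add]
      congr 1
      refine Finset.sum_congr rfl fun i _ => ?_
      rw [← Function.iterate_add_apply, add_comm]
    have hn : n = k + (n - k) := by omega
    have := gen (n - k)
    rw [← hn] at this
    linarith
  set δ : ℝ := eps / 2 with hδ
  have hδpos : 0 < δ := by positivity
  obtain ⟨N, hN⟩ := (Metric.tendsto_atTop.mp hx) δ hδpos
  have hN' : ∀ n : ℕ, N ≤ n → |birkhoff f φ n x - n * lam| ≤ δ * n := by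
    intro n hn
    rcases Nat.eq_zero_or_pos n with h0 | h0
    · simp [h0, birkhoff]
    have hnpos : (0:ℝ) < n := by exact_mod_cast h0
    have := hN n hn
    rw [Real.dist_eq] at this
    have heq : lyapAvg f a n x = birkhoff f φ n x / n := rfl
    have h2 : |birkhoff f φ n x / n - lam| ≤ δ := by
      rw [heq] at this; linarith [this]
    have h3 : |(birkhoff f φ n x - n * lam) / n| ≤ δ := by
      have : (birkhoff f φ n x - n * lam) / n = birkhoff f φ n x / n - lam := by
        field_simp
      rwa [this]
    rw [abs_div, abs_of_pos hnpos] at h3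
    calc |birkhoff f φ n x - n * lam| = |birkhoff f φ n x - n * lam| / n * n := by
          field_simp
      _ ≤ δ * n := by
          apply mul_le_mul_of_nonneg_right h3 (le_of_lt hnpos)
  set B : ℝ := ∑ m ∈ Finset.range (N + 1), |birkhoff f φ m x - m * lam| with hB
  have hBnonneg : 0 ≤ B := Finset.sum_nonneg fun _ _ => abs_nonneg _
  have bound : ∀ n : ℕ, |birkhoff f φ n x - n * lam| ≤ δ * n + B := by
    intro n
    rcases le_or_gt N n with h | h
    · have := hN' n h
      linarith
    · have hmem : n ∈ Finset.range (N + 1) := Finset.mem_range.mpr (by omega)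
      have := Finset.single_le_sum (f := fun m => |birkhoff f φ m x - m * lam|)
        (fun i _ => abs_nonneg _) hmem
      have hδn : 0 ≤ δ * n := by positivity
      linarith
  refine ⟨-(2 * B), fun n k hk => ?_⟩
  rw [key n k hk]
  have h1 := abs_le.mp (bound n)
  have h2 := abs_le.mp (bound k)
  have hkn : (k : ℝ) ≤ n := by exact_mod_cast hk
  have hklam : (k : ℝ) * lam ≤ n * lam := by nlinarith
  have hk0 : (0:ℝ) ≤ k := Nat.cast_nonneg k
  nlinarith [h1.1, h1.2, h2.1, h2.2]
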